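/- Contractivity of the decreasing rearrangement: for u, v ∈ L^p(Ω), 1 ≤ p ≤ ∞, one has ‖u_* − v_*‖_{L^p(0,|Ω|)} ≤ ‖u − v‖_{L^p(Ω)}. -/

import Mathlib

open MeasureTheory Set

/-- Distribution function `m_u(q) = |{x ∈ Ω : u(x) > q}|`. -/
noncomputable def distFun {d : ℕ} (Ω : Set (EuclideanSpace ℝ (Fin d)))
    (u : EuclideanSpace ℝ (Fin d) → ℝ) (q : ℝ) : ℝ :=
  (volume {x | x ∈ Ω ∧ q < u x}).toReal

/-- Decreasing rearrangement `u_*(s) = inf {q : m_u(q) ≤ s}`. -/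
noncomputable def decRearr {d : ℕ} (Ω : Set (EuclideanSpace ℝ (Fin d)))
    (u : EuclideanSpace ℝ (Fin d) → ℝ) (s : ℝ) : ℝ :=
  sInf {q : ℝ | distFun Ω u q ≤ s}

section Basic

variable {d : ℕ} {Ω : Set (EuclideanSpace ℝ (Fin d))} {u : EuclideanSpace ℝ (Fin d) → ℝ}
  (hΩ : MeasurableSet Ω) (hfin : volume Ω ≠ ⊤) (hu : Measurable u)

lemma meas_level_ne_top (hfin : volume Ω ≠ ⊤) (q : ℝ) :
    volume {x | x ∈ Ω ∧ q < u x} ≠ ⊤ :=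
  ne_top_of_le_ne_top hfin (measure_mono (fun x hx => hx.1))

lemma distFun_anti (hfin : volume Ω ≠ ⊤) {q q' : ℝ} (h : q ≤ q') :
    distFun Ω u q' ≤ distFun Ω u q := by
  apply ENNReal.toReal_mono (meas_level_ne_top hfin q)
  exact measure_mono (fun x hx => ⟨hx.1, lt_of_le_of_lt h hx.2⟩)

lemma distFun_nonneg (q : ℝ) : 0 ≤ distFun Ω u q := ENNReal.toReal_nonneg

/-- The defining set of `decRearr` is nonempty for `s > 0`. -/
lemma decRearr_set_nonempty (hΩ : MeasurableSet Ω) (hfin : volume Ω ≠ ⊤) (hu : Measurable u)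
    {s : ℝ} (hs : 0 < s) : {q : ℝ | distFun Ω u q ≤ s}.Nonempty := by
  have hmeas : ∀ n : ℕ, NullMeasurableSet {x | x ∈ Ω ∧ (n : ℝ) < u x} (volume) := by
    intro n
    exact (hΩ.inter (hu measurableSet_Ioi)).nullMeasurableSet
  have hanti : Antitone (fun n : ℕ => {x | x ∈ Ω ∧ (n : ℝ) < u x}) := by
    intro m n hmn x hx
    exact ⟨hx.1, lt_of_le_of_lt (by exact_mod_cast hmn) hx.2⟩
  have hempty : (⋂ n : ℕ, {x | x ∈ Ω ∧ (n : ℝ) < u x}) = (∅ : Set _) := by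
    ext x
    simp only [mem_iInter, mem_empty_iff_false, iff_false]
    intro h
    obtain ⟨n, hn⟩ := exists_nat_gt (u x)
    exact absurd (h n).2 (not_lt.mpr hn.le)
  have h0 : (⨅ n : ℕ, volume {x | x ∈ Ω ∧ (n : ℝ) < u x}) = 0 := by
    rw [← Antitone.measure_iInter hanti hmeas ⟨0, meas_level_ne_top hfin _⟩, hempty,
      measure_empty]
  have : (⨅ n : ℕ, volume {x | x ∈ Ω ∧ (n : ℝ) < u x}) < ENNReal.ofReal s := by
    rw [h0]; exact ENNReal.ofReal_pos.mpr hs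
  rw [iInf_lt_iff] at this
  obtain ⟨n, hn⟩ := this
  exact ⟨(n : ℝ), ENNReal.toReal_le_of_le_ofReal hs.le hn.le⟩

lemma exists_distFun_gt {s : ℝ} (hfin : volume Ω ≠ ⊤) (hs0 : 0 ≤ s)
    (hs : s < (volume Ω).toReal) : ∃ q₀ : ℝ, s < distFun Ω u q₀ := by
  have hmono : Monotone (fun n : ℕ => {x | x ∈ Ω ∧ -(n : ℝ) < u x}) := by
    intro m n hmn x hx
    exact ⟨hx.1, lt_of_le_of_lt (neg_le_neg (by exact_mod_cast hmn)) hx.2⟩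
  have hunion : (⋃ n : ℕ, {x | x ∈ Ω ∧ -(n : ℝ) < u x}) = Ω := by
    ext x
    simp only [mem_iUnion, mem_setOf_eq]
    constructor
    · rintro ⟨n, hn, _⟩; exact hn
    · intro hx
      obtain ⟨n, hn⟩ := exists_nat_gt (-u x)
      exact ⟨n, hx, by linarith⟩
  have hsup : (⨆ n : ℕ, volume {x | x ∈ Ω ∧ -(n : ℝ) < u x}) = volume Ω := by
    conv_rhs => rw [← hunion]
    exact (hmono.directed_le.measure_iUnion).symm
  have hlt : ENNReal.ofReal s < volume Ω := by
    rwa [ENNReal.ofReal_lt_iff_lt_toReal hs0 hfin]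
  rw [← hsup, lt_iSup_iff] at hlt
  obtain ⟨n, hn⟩ := hlt
  refine ⟨-(n : ℝ), ?_⟩
  have := (ENNReal.toReal_lt_toReal ENNReal.ofReal_ne_top (meas_level_ne_top hfin _)).mpr hn
  rwa [ENNReal.toReal_ofReal hs0] at this

lemma bddBelow_decRearr_set {s : ℝ} (hfin : volume Ω ≠ ⊤) (hs0 : 0 ≤ s)
    (hs : s < (volume Ω).toReal) : BddBelow {q : ℝ | distFun Ω u q ≤ s} := by
  obtain ⟨q₀, hq₀⟩ := exists_distFun_gt (u := u) hfin hs0 hs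
  refine ⟨q₀, fun q hq => ?_⟩
  by_contra hlt
  push_neg at hlt
  have : distFun Ω u q₀ ≤ distFun Ω u q := distFun_anti hfin hlt.le
  simp only [mem_setOf_eq] at hq
  linarith

end Basic
section Char

variable {d : ℕ} {Ω : Set (EuclideanSpace ℝ (Fin d))} {u : EuclideanSpace ℝ (Fin d) → ℝ}

/-- Right continuity of the distribution function. -/
lemma distFun_le_of_forall_lt (hfin : volume Ω ≠ ⊤) {q s : ℝ} (hs0 : 0 ≤ s)
    (h : ∀ q' > q, distFun Ω u q' ≤ s) : distFun Ω u q ≤ s := by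
  have hmono : Monotone (fun n : ℕ => {x | x ∈ Ω ∧ q + 1 / (n + 1) < u x}) := by
    intro m n hmn x hx
    refine ⟨hx.1, lt_of_le_of_lt ?_ hx.2⟩
    have h1 : (0:ℝ) < (m:ℝ) + 1 := by positivity
    gcongr <;> exact_mod_cast hmn
  have hunion : (⋃ n : ℕ, {x | x ∈ Ω ∧ q + 1 / (n + 1) < u x}) = {x | x ∈ Ω ∧ q < u x} := by
    ext x
    simp only [mem_iUnion, mem_setOf_eq]
    constructor
    · rintro ⟨n, hn, hlt⟩
      exact ⟨hn, lt_trans (lt_add_of_pos_right q (by positivity)) hlt⟩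
    · rintro ⟨hn, hlt⟩
      obtain ⟨n, hln⟩ := exists_nat_one_div_lt (sub_pos.mpr hlt)
      exact ⟨n, hn, by push_cast at hln ⊢; linarith⟩
  have hsup : volume {x | x ∈ Ω ∧ q < u x}
      = ⨆ n : ℕ, volume {x | x ∈ Ω ∧ q + 1 / (n + 1) < u x} := by
    rw [← hunion]; exact hmono.directed_le.measure_iUnion
  have hle : volume {x | x ∈ Ω ∧ q < u x} ≤ ENNReal.ofReal s := by
    rw [hsup]
    refine iSup_le fun n => ?_
    have := h (q + 1 / (n + 1)) (lt_add_of_pos_right q (by positivity))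
    exact (ENNReal.le_ofReal_iff_toReal_le (meas_level_ne_top hfin _) hs0).mpr this
  calc distFun Ω u q ≤ (ENNReal.ofReal s).toReal := by
        exact ENNReal.toReal_mono ENNReal.ofReal_ne_top hle
    _ = s := ENNReal.toReal_ofReal hs0

lemma lt_decRearr (hΩ : MeasurableSet Ω) (hfin : volume Ω ≠ ⊤) (hu : Measurable u)
    {s t : ℝ} (hs : 0 < s) (h : s < distFun Ω u t) : t < decRearr Ω u s := by
  have hne := decRearr_set_nonempty hΩ hfin hu hs
  have hlb : ∀ q ∈ {q : ℝ | distFun Ω u q ≤ s}, t ≤ q := by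
    intro q hq
    by_contra hlt
    push_neg at hlt
    have := distFun_anti (u := u) hfin hlt.le
    simp only [mem_setOf_eq] at hq
    linarith
  have hge : t ≤ decRearr Ω u s := le_csInf hne hlb
  rcases lt_or_eq_of_le hge with h' | h'
  · exact h'
  exfalso
  have hforall : ∀ q' > t, distFun Ω u q' ≤ s := by
    intro q' hq'
    have hlt' : sInf {q : ℝ | distFun Ω u q ≤ s} < q' := by
      have : decRearr Ω u s < q' := h' ▸ hq'
      exact this
    obtain ⟨q'', hq''mem, hq''lt⟩ := exists_lt_of_csInf_lt hne hlt'
    exact le_trans (distFun_anti hfin hq''lt.le) hq''mem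
  have := distFun_le_of_forall_lt hfin hs.le hforall
  linarith

lemma decRearr_le (hfin : volume Ω ≠ ⊤) {s t : ℝ} (hs0 : 0 ≤ s)
    (hsL : s < (volume Ω).toReal) (h : distFun Ω u t ≤ s) : decRearr Ω u s ≤ t :=
  csInf_le (bddBelow_decRearr_set hfin hs0 hsL) h

/-- On `(0, |Ω|)`: `u_*(s) > t ↔ s < m_u(t)`. -/
lemma lt_decRearr_iff (hΩ : MeasurableSet Ω) (hfin : volume Ω ≠ ⊤) (hu : Measurable u)
    {s t : ℝ} (hs : 0 < s) (hsL : s < (volume Ω).toReal) :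
    t < decRearr Ω u s ↔ s < distFun Ω u t := by
  constructor
  · intro h
    by_contra hle
    push_neg at hle
    exact absurd (decRearr_le hfin hs.le hsL hle) (not_le.mpr h)
  · exact lt_decRearr hΩ hfin hu hs

/-- On `(0, |Ω|)`: `u_*(s) < q ↔ ∃ q' < q, m_u(q') ≤ s`. -/
lemma decRearr_lt_iff (hΩ : MeasurableSet Ω) (hfin : volume Ω ≠ ⊤) (hu : Measurable u)
    {s q : ℝ} (hs : 0 < s) (hsL : s < (volume Ω).toReal) :
    decRearr Ω u s < q ↔ ∃ q' < q, distFun Ω u q' ≤ s := by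
  constructor
  · intro h
    obtain ⟨q', hq'mem, hq'lt⟩ := exists_lt_of_csInf_lt (decRearr_set_nonempty hΩ hfin hu hs) h
    exact ⟨q', hq'lt, hq'mem⟩
  · rintro ⟨q', hq'lt, hq'le⟩
    exact lt_of_le_of_lt (csInf_le (bddBelow_decRearr_set hfin hs.le hsL) hq'le) hq'lt

end Char
section Meas

variable {d : ℕ} {Ω : Set (EuclideanSpace ℝ (Fin d))} {u v : EuclideanSpace ℝ (Fin d) → ℝ}

lemma measurable_indicator_decRearr (hΩ : MeasurableSet Ω) (hfin : volume Ω ≠ ⊤)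
    (hu : Measurable u) :
    Measurable ((Ioo (0:ℝ) (volume Ω).toReal).indicator (decRearr Ω u)) := by
  set L := (volume Ω).toReal with hL
  apply measurable_of_Iio
  intro c
  have hU : MeasurableSet {s : ℝ | ∃ q' < c, distFun Ω u q' ≤ s} := by
    apply Set.OrdConnected.measurableSet
    constructor
    rintro x ⟨q', h1, h2⟩ y _ z hz
    exact ⟨q', h1, le_trans h2 hz.1⟩
  have hset : (Ioo (0:ℝ) L).indicator (decRearr Ω u) ⁻¹' (Iio c)
      = (Ioo (0:ℝ) L ∩ {s : ℝ | ∃ q' < c, distFun Ω u q' ≤ s})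
        ∪ ((Ioo (0:ℝ) L)ᶜ ∩ {_s : ℝ | (0:ℝ) < c}) := by
    ext s
    by_cases hs : s ∈ Ioo (0:ℝ) L
    · simp only [mem_preimage, mem_Iio, indicator_of_mem hs, mem_union, mem_inter_iff, hs,
        mem_compl_iff, not_true_eq_false, false_and, or_false, true_and, mem_setOf_eq]
      exact decRearr_lt_iff hΩ hfin hu hs.1 hs.2
    · simp only [mem_preimage, mem_Iio, indicator_of_notMem hs, mem_union, mem_inter_iff, hs,
        false_and, false_or, mem_compl_iff, not_false_eq_true, true_and, mem_setOf_eq]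
  rw [hset]
  refine (measurableSet_Ioo.inter hU).union (measurableSet_Ioo.compl.inter ?_)
  by_cases hc : (0:ℝ) < c
  · simp only [hc, setOf_true]; exact MeasurableSet.univ
  · simp only [hc, setOf_false]; exact MeasurableSet.empty

/-- The key measure comparison between the rearranged side and the original side. -/
lemma hcmp (hΩ : MeasurableSet Ω) (hfin : volume Ω ≠ ⊤)
    (hu : Measurable u) (hv : Measurable v) (t q : ℝ) :
    (volume.restrict (Ioo (0:ℝ) (volume Ω).toReal))
        ({s | t < (Ioo (0:ℝ) (volume Ω).toReal).indicator (decRearr Ω u) s}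
          ∩ {s | (Ioo (0:ℝ) (volume Ω).toReal).indicator (decRearr Ω v) s < q})
      ≤ (volume.restrict Ω) ({x | t < u x} ∩ {x | v x < q}) := by
  set L := (volume Ω).toReal with hLdef
  have hmU := measurable_indicator_decRearr hΩ hfin hu
  have hmV := measurable_indicator_decRearr hΩ hfin hv
  rw [Measure.restrict_apply ((measurableSet_lt measurable_const hmU).inter
    (measurableSet_lt hmV measurable_const)),
    Measure.restrict_apply ((measurableSet_lt measurable_const hu).inter
    (measurableSet_lt hv measurable_const))]
  set ρ := (volume {x | x ∈ Ω ∧ q ≤ v x}).toReal with hρdef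
  have hsub : ({s | t < (Ioo (0:ℝ) L).indicator (decRearr Ω u) s}
      ∩ {s | (Ioo (0:ℝ) L).indicator (decRearr Ω v) s < q}) ∩ Ioo (0:ℝ) L
      ⊆ Ico ρ (distFun Ω u t) := by
    rintro s ⟨⟨h1, h2⟩, hs⟩
    simp only [mem_setOf_eq, indicator_of_mem hs] at h1 h2
    constructor
    · obtain ⟨q', hq'lt, hq'le⟩ := (decRearr_lt_iff hΩ hfin hv hs.1 hs.2).mp h2
      refine le_trans ?_ hq'le
      apply ENNReal.toReal_mono (meas_level_ne_top hfin q')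
      exact measure_mono (fun x hx => ⟨hx.1, lt_of_lt_of_le hq'lt hx.2⟩)
    · exact (lt_decRearr_iff hΩ hfin hu hs.1 hs.2).mp h1
  refine le_trans (measure_mono hsub) ?_
  rw [Real.volume_Ico]
  have hH : volume (({x | t < u x} ∩ {x | v x < q}) ∩ Ω) ≠ ⊤ :=
    ne_top_of_le_ne_top hfin (measure_mono inter_subset_right)
  have hB : volume {x | x ∈ Ω ∧ q ≤ v x} ≠ ⊤ :=
    ne_top_of_le_ne_top hfin (measure_mono (fun x hx => hx.1))
  have hAHB : volume {x | x ∈ Ω ∧ t < u x}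
      ≤ volume (({x | t < u x} ∩ {x | v x < q}) ∩ Ω) + volume {x | x ∈ Ω ∧ q ≤ v x} := by
    refine le_trans (measure_mono ?_) (measure_union_le _ _)
    intro x hx
    by_cases hvx : v x < q
    · exact Or.inl ⟨⟨hx.2, hvx⟩, hx.1⟩
    · exact Or.inr ⟨hx.1, not_lt.mp hvx⟩
  have h1 : distFun Ω u t ≤ (volume (({x | t < u x} ∩ {x | v x < q}) ∩ Ω)).toReal + ρ := by
    have h2 := ENNReal.toReal_mono (ENNReal.add_ne_top.mpr ⟨hH, hB⟩) hAHB
    rwa [ENNReal.toReal_add hH hB] at h2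
  calc ENNReal.ofReal (distFun Ω u t - ρ)
      ≤ ENNReal.ofReal (volume (({x | t < u x} ∩ {x | v x < q}) ∩ Ω)).toReal :=
        ENNReal.ofReal_le_ofReal (by linarith)
    _ = volume (({x | t < u x} ∩ {x | v x < q}) ∩ Ω) := ENNReal.ofReal_toReal hH

end Meas
section CalcA

open ENNReal

lemma calcA {p' : ℝ} (hp' : 1 ≤ p') (a b : ℝ) :
    ∫⁻ q : ℝ, ENNReal.ofReal (if a < q ∧ q < b then p' * (b - q) ^ (p' - 1) else 0)
      = ENNReal.ofReal (max (b - a) 0 ^ p') := by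
  have hp0 : (0:ℝ) < p' := lt_of_lt_of_le one_pos hp'
  rcases le_or_gt b a with hba | hab
  · have hfalse : ∀ q : ℝ, ¬(a < q ∧ q < b) := by
      rintro q ⟨h1, h2⟩; exact absurd (lt_trans h1 h2) (not_lt.mpr hba)
    simp [hfalse, max_eq_right (sub_nonpos.mpr hba), Real.zero_rpow (ne_of_gt hp0)]
  · have hrw : ∀ q : ℝ,
        ENNReal.ofReal (if a < q ∧ q < b then p' * (b - q) ^ (p' - 1) else 0)
          = (Ioo a b).indicator (fun q => ENNReal.ofReal (p' * (b - q) ^ (p' - 1))) q := by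
      intro q
      by_cases h : q ∈ Ioo a b
      · rw [indicator_of_mem h]; simp only [mem_Ioo] at h; rw [if_pos h]
      · rw [indicator_of_notMem h]; simp only [mem_Ioo] at h; rw [if_neg h,
          ENNReal.ofReal_zero]
    simp_rw [hrw]
    rw [lintegral_indicator measurableSet_Ioo]
    have hcont : Continuous (fun q : ℝ => p' * (b - q) ^ (p' - 1)) := by
      rcases eq_or_lt_of_le hp' with h1 | h1
      · have : (fun q : ℝ => p' * (b - q) ^ (p' - 1)) = fun _ => p' := by
          funext q; rw [← h1]; simp [Real.rpow_zero]
        rw [this]; exact continuous_const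
      · have hc : Continuous (fun x : ℝ => x ^ (p' - 1)) := by
          rw [continuous_iff_continuousAt]
          intro x
          exact Real.continuousAt_rpow_const x _ (Or.inr (by linarith))
        exact continuous_const.mul (hc.comp (continuous_const.sub continuous_id))
    have hint : IntegrableOn (fun q : ℝ => p' * (b - q) ^ (p' - 1)) (Ioo a b) :=
      (hcont.continuousOn.integrableOn_compact isCompact_Icc).mono_set Ioo_subset_Icc_self
    have hnn : 0 ≤ᵐ[volume.restrict (Ioo a b)] fun q => p' * (b - q) ^ (p' - 1) := by
      filter_upwards [ae_restrict_mem measurableSet_Ioo] with q hq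
      exact mul_nonneg hp0.le (Real.rpow_nonneg (by linarith [hq.2]) _)
    rw [← ofReal_integral_eq_lintegral_ofReal hint hnn]
    congr 1
    rw [← integral_Ioc_eq_integral_Ioo, ← intervalIntegral.integral_of_le hab.le]
    rw [intervalIntegral.integral_const_mul]
    have hcs := intervalIntegral.integral_comp_sub_left (a := a) (b := b)
      (fun x : ℝ => x ^ (p' - 1)) b
    rw [hcs, sub_self]
    rw [integral_rpow (Or.inl (by linarith : (-1:ℝ) < p' - 1))]
    rw [sub_add_cancel, Real.zero_rpow (by linarith : p' ≠ 0)]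
    rw [max_eq_left (by linarith : (0:ℝ) ≤ b - a)]
    field_simp
    rw [sub_zero]
end CalcA
section Main

variable {α β : Type*} [MeasurableSpace α] [MeasurableSpace β]

lemma measR {f g : α → ℝ} (hf : Measurable f) (hg : Measurable g) (p' q : ℝ) :
    Measurable (fun a => if g a < q ∧ q < f a then p' * (f a - q) ^ (p' - 1) else 0) := by
  refine Measurable.ite ?_ ?_ measurable_const
  · exact (measurableSet_lt hg measurable_const).inter (measurableSet_lt measurable_const hf)
  · exact ((hf.sub measurable_const).pow measurable_const).const_mul p'

lemma setR_one {γ : Type*} (F G : γ → ℝ) {p' r q : ℝ} (hp1 : (1:ℝ) = p') (hr : 0 < r)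
    (hr1 : r < 1) :
    {x : γ | r < (if G x < q ∧ q < F x then p' * (F x - q) ^ (p' - 1) else 0)}
      = {x | q < F x} ∩ {x | G x < q} := by
  ext x
  simp only [mem_setOf_eq, mem_inter_iff, ← hp1, sub_self, Real.rpow_zero, mul_one]
  split_ifs with h
  · simp [hr1, h.1, h.2]
  · simp only [not_and_or, not_lt] at h
    constructor
    · intro hlt; linarith
    · rintro ⟨h1, h2⟩
      rcases h with h | h
      · linarith
      · linarith

lemma setR_empty {γ : Type*} (F G : γ → ℝ) {p' r q : ℝ} (hp1 : (1:ℝ) = p') (hr1 : 1 ≤ r) :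
    {x : γ | r < (if G x < q ∧ q < F x then p' * (F x - q) ^ (p' - 1) else 0)} = ∅ := by
  ext x
  simp only [mem_setOf_eq, mem_empty_iff_false, iff_false, not_lt, ← hp1, sub_self,
    Real.rpow_zero, mul_one]
  split_ifs
  · exact hr1
  · linarith

lemma setR_gt {γ : Type*} (F G : γ → ℝ) {p' r q : ℝ} (hp1 : 1 < p') (hr : 0 < r) :
    {x : γ | r < (if G x < q ∧ q < F x then p' * (F x - q) ^ (p' - 1) else 0)}
      = {x | q + (r / p') ^ (p' - 1)⁻¹ < F x} ∩ {x | G x < q} := by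
  have hp0 : (0:ℝ) < p' := by linarith
  have hc : (0:ℝ) < p' - 1 := by linarith
  ext x
  simp only [mem_setOf_eq, mem_inter_iff]
  split_ifs with h
  · constructor
    · intro hlt
      have h2 : r / p' < (F x - q) ^ (p' - 1) := by
        rw [div_lt_iff₀ hp0, mul_comm]; exact hlt
      have h3 := Real.rpow_lt_rpow (div_nonneg hr.le hp0.le) h2 (inv_pos.mpr hc)
      rw [Real.rpow_rpow_inv (by linarith [h.2] : (0:ℝ) ≤ F x - q) hc.ne'] at h3
      exact ⟨by linarith, h.1⟩
    · rintro ⟨h1, _⟩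
      have h3 : (r / p') ^ (p' - 1)⁻¹ < F x - q := by linarith
      have h4 := Real.rpow_lt_rpow (Real.rpow_nonneg (div_nonneg hr.le hp0.le) _) h3 hc
      rw [Real.rpow_inv_rpow (div_nonneg hr.le hp0.le) hc.ne'] at h4
      rw [div_lt_iff₀ hp0, mul_comm] at h4
      exact h4
  · constructor
    · intro hlt; linarith
    · rintro ⟨h1, h2⟩
      exfalso
      apply h
      refine ⟨h2, ?_⟩
      have hpos : (0:ℝ) < (r / p') ^ (p' - 1)⁻¹ := Real.rpow_pos_of_pos (div_pos hr hp0) _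
      linarith

lemma step_per_q {ν : Measure α} {ν' : Measure β} {f g : α → ℝ} {f' g' : β → ℝ}
    (hf : Measurable f) (hg : Measurable g) (hf' : Measurable f') (hg' : Measurable g')
    {p' : ℝ} (hp' : 1 ≤ p')
    (H : ∀ t q : ℝ, ν ({a | t < f a} ∩ {a | g a < q}) ≤ ν' ({b | t < f' b} ∩ {b | g' b < q}))
    (q : ℝ) :
    ∫⁻ a, ENNReal.ofReal (if g a < q ∧ q < f a then p' * (f a - q) ^ (p' - 1) else 0) ∂ν
      ≤ ∫⁻ b, ENNReal.ofReal (if g' b < q ∧ q < f' b then p' * (f' b - q) ^ (p' - 1) else 0) ∂ν' := by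
  have hp0 : (0:ℝ) < p' := lt_of_lt_of_le one_pos hp'
  have hnn1 : 0 ≤ᵐ[ν] (fun a => if g a < q ∧ q < f a then p' * (f a - q) ^ (p' - 1) else 0) := by
    refine Filter.Eventually.of_forall (fun x => ?_)
    simp only [Pi.zero_apply]
    split_ifs with h
    · exact mul_nonneg hp0.le (Real.rpow_nonneg (by linarith [h.2]) _)
    · exact le_refl 0
  have hnn2 : 0 ≤ᵐ[ν'] (fun b => if g' b < q ∧ q < f' b then p' * (f' b - q) ^ (p' - 1) else 0) := by
    refine Filter.Eventually.of_forall (fun x => ?_)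
    simp only [Pi.zero_apply]
    split_ifs with h
    · exact mul_nonneg hp0.le (Real.rpow_nonneg (by linarith [h.2]) _)
    · exact le_refl 0
  rw [lintegral_eq_lintegral_meas_lt ν hnn1 (measR hf hg p' q).aemeasurable,
    lintegral_eq_lintegral_meas_lt ν' hnn2 (measR hf' hg' p' q).aemeasurable]
  refine lintegral_mono_ae ?_
  filter_upwards [ae_restrict_mem measurableSet_Ioi] with r hr
  simp only [mem_Ioi] at hr
  rcases eq_or_lt_of_le hp' with hp1 | hp1
  · by_cases hr1 : r < 1
    · rw [setR_one f g hp1 hr hr1, setR_one f' g' hp1 hr hr1]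
      exact H q q
    · rw [setR_empty f g hp1 (not_lt.mp hr1)]
      simp
  · rw [setR_gt f g hp1 hr, setR_gt f' g' hp1 hr]
    exact H _ q

lemma main_ineq (ν : Measure α) (ν' : Measure β) [SFinite ν] [SFinite ν']
    {f g : α → ℝ} {f' g' : β → ℝ}
    (hf : Measurable f) (hg : Measurable g) (hf' : Measurable f') (hg' : Measurable g')
    {p' : ℝ} (hp' : 1 ≤ p')
    (H : ∀ t q : ℝ, ν ({a | t < f a} ∩ {a | g a < q}) ≤ ν' ({b | t < f' b} ∩ {b | g' b < q})) :
    ∫⁻ a, ENNReal.ofReal (max (f a - g a) 0 ^ p') ∂ν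
      ≤ ∫⁻ b, ENNReal.ofReal (max (f' b - g' b) 0 ^ p') ∂ν' := by
  have hjm1 : Measurable (Function.uncurry fun a (q : ℝ) =>
      ENNReal.ofReal (if g a < q ∧ q < f a then p' * (f a - q) ^ (p' - 1) else 0)) := by
    refine Measurable.ennreal_ofReal ?_
    refine Measurable.ite ?_ ?_ measurable_const
    · exact (measurableSet_lt (hg.comp measurable_fst) measurable_snd).inter
        (measurableSet_lt measurable_snd (hf.comp measurable_fst))
    · exact (((hf.comp measurable_fst).sub measurable_snd).pow measurable_const).const_mul p'
  have hjm2 : Measurable (Function.uncurry fun b (q : ℝ) =>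
      ENNReal.ofReal (if g' b < q ∧ q < f' b then p' * (f' b - q) ^ (p' - 1) else 0)) := by
    refine Measurable.ennreal_ofReal ?_
    refine Measurable.ite ?_ ?_ measurable_const
    · exact (measurableSet_lt (hg'.comp measurable_fst) measurable_snd).inter
        (measurableSet_lt measurable_snd (hf'.comp measurable_fst))
    · exact (((hf'.comp measurable_fst).sub measurable_snd).pow measurable_const).const_mul p'
  calc ∫⁻ a, ENNReal.ofReal (max (f a - g a) 0 ^ p') ∂ν
      = ∫⁻ a, ∫⁻ q : ℝ, ENNReal.ofReal
          (if g a < q ∧ q < f a then p' * (f a - q) ^ (p' - 1) else 0) ∂volume ∂ν :=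
        lintegral_congr fun a => (calcA hp' (g a) (f a)).symm
    _ = ∫⁻ q : ℝ, ∫⁻ a, ENNReal.ofReal
          (if g a < q ∧ q < f a then p' * (f a - q) ^ (p' - 1) else 0) ∂ν ∂volume :=
        lintegral_lintegral_swap (μ := ν) (ν := volume) hjm1.aemeasurable
    _ ≤ ∫⁻ q : ℝ, ∫⁻ b, ENNReal.ofReal
          (if g' b < q ∧ q < f' b then p' * (f' b - q) ^ (p' - 1) else 0) ∂ν' ∂volume :=
        lintegral_mono fun q => step_per_q hf hg hf' hg' hp' H q
    _ = ∫⁻ b, ∫⁻ q : ℝ, ENNReal.ofReal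
          (if g' b < q ∧ q < f' b then p' * (f' b - q) ^ (p' - 1) else 0) ∂volume ∂ν' :=
        (lintegral_lintegral_swap (μ := ν') (ν := volume) hjm2.aemeasurable).symm
    _ = ∫⁻ b, ENNReal.ofReal (max (f' b - g' b) 0 ^ p') ∂ν' :=
        lintegral_congr fun b => calcA hp' (g' b) (f' b)

end Main
section Final

open scoped ENNReal NNReal

variable {d : ℕ} {Ω : Set (EuclideanSpace ℝ (Fin d))} {u v : EuclideanSpace ℝ (Fin d) → ℝ}

lemma distFun_shift (hfin : volume Ω ≠ ⊤) {M : ℝ}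
    (h : ∀ᵐ x ∂volume, x ∈ Ω → u x - v x ≤ M) (q : ℝ) :
    distFun Ω u (q + M) ≤ distFun Ω v q := by
  apply ENNReal.toReal_mono (meas_level_ne_top hfin q)
  apply measure_mono_ae
  filter_upwards [h] with x hx hmem
  exact ⟨hmem.1, by have := hx hmem.1; linarith [hmem.2]⟩

lemma decRearr_le_add (hΩ : MeasurableSet Ω) (hfin : volume Ω ≠ ⊤)
    (hu : Measurable u) (hv : Measurable v) {M : ℝ}
    (hshift : ∀ q : ℝ, distFun Ω u (q + M) ≤ distFun Ω v q)
    {s : ℝ} (hs : 0 < s) (hsL : s < (volume Ω).toReal) :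
    decRearr Ω u s ≤ decRearr Ω v s + M := by
  have hkey : ∀ q ∈ {q : ℝ | distFun Ω v q ≤ s}, decRearr Ω u s - M ≤ q := by
    intro q hq
    simp only [mem_setOf_eq] at hq
    have : decRearr Ω u s ≤ q + M :=
      decRearr_le hfin hs.le hsL (le_trans (hshift q) hq)
    linarith
  have := le_csInf (decRearr_set_nonempty hΩ hfin hv hs) hkey
  have h2 : decRearr Ω u s - M ≤ decRearr Ω v s := this
  linarith

/-- The `p = ∞` case. -/
lemma linfty_case (hΩ : MeasurableSet Ω) (hfin : volume Ω ≠ ⊤)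
    (hu : Measurable u) (hv : Measurable v) :
    eLpNorm (fun s => decRearr Ω u s - decRearr Ω v s) ⊤
        (volume.restrict (Ioo (0:ℝ) ((volume Ω).toReal)))
      ≤ eLpNorm (fun x => u x - v x) ⊤ (volume.restrict Ω) := by
  set C := eLpNorm (fun x => u x - v x) ⊤ (volume.restrict Ω) with hCdef
  by_cases hC : C = ⊤
  · rw [hC]; exact le_top
  set M := C.toReal with hMdef
  have hae : ∀ᵐ x ∂(volume.restrict Ω), |u x - v x| ≤ M := by
    have h1 := enorm_ae_le_eLpNormEssSup (fun x => u x - v x) (volume.restrict Ω)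
    filter_upwards [h1] with x hx
    have h2 : ((‖u x - v x‖₊ : ℝ≥0∞)).toReal ≤ M := by
      apply ENNReal.toReal_mono hC
      rwa [hCdef, eLpNorm_exponent_top]
    simpa [Real.norm_eq_abs] using h2
  have hae' : ∀ᵐ x ∂volume, x ∈ Ω → |u x - v x| ≤ M := (ae_restrict_iff' hΩ).mp hae
  have hshift1 : ∀ q : ℝ, distFun Ω u (q + M) ≤ distFun Ω v q := by
    intro q
    apply distFun_shift hfin _ q
    filter_upwards [hae'] with x hx hmem
    have := hx hmem
    exact le_trans (le_abs_self _) this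
  have hshift2 : ∀ q : ℝ, distFun Ω v (q + M) ≤ distFun Ω u q := by
    intro q
    apply distFun_shift hfin _ q
    filter_upwards [hae'] with x hx hmem
    have := hx hmem
    rw [abs_sub_comm] at this
    exact le_trans (le_abs_self _) this
  have hbound : ∀ᵐ s ∂(volume.restrict (Ioo (0:ℝ) ((volume Ω).toReal))),
      ‖decRearr Ω u s - decRearr Ω v s‖ ≤ M := by
    filter_upwards [ae_restrict_mem measurableSet_Ioo] with s hs
    rw [Real.norm_eq_abs, abs_le]
    constructor
    · have := decRearr_le_add hΩ hfin hv hu hshift2 hs.1 hs.2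
      linarith
    · have := decRearr_le_add hΩ hfin hu hv hshift1 hs.1 hs.2
      linarith
  rw [eLpNorm_exponent_top]
  refine le_trans (eLpNormEssSup_le_of_ae_bound hbound) (le_of_eq ?_)
  rw [hMdef, ENNReal.ofReal_toReal hC]

lemma enorm_rpow_split {p' : ℝ} (hp' : 1 ≤ p') (y : ℝ) :
    ((‖y‖₊ : ℝ≥0∞)) ^ p'
      = ENNReal.ofReal (max y 0 ^ p') + ENNReal.ofReal (max (-y) 0 ^ p') := by
  have hp0 : (0:ℝ) < p' := lt_of_lt_of_le one_pos hp'
  have hcoe : ((‖y‖₊ : ℝ≥0∞)) = ENNReal.ofReal |y| := by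
    rw [← Real.nnnorm_abs]; exact Real.enorm_eq_ofReal (abs_nonneg y)
  rcases le_total 0 y with hy | hy
  · rw [hcoe, abs_of_nonneg hy, max_eq_left hy, max_eq_right (neg_nonpos.mpr hy),
      Real.zero_rpow hp0.ne', ENNReal.ofReal_zero, add_zero,
      ENNReal.ofReal_rpow_of_nonneg hy hp0.le]
  · rw [hcoe, abs_of_nonpos hy, max_eq_right hy, max_eq_left (neg_nonneg.mpr hy),
      Real.zero_rpow hp0.ne', ENNReal.ofReal_zero, zero_add,
      ENNReal.ofReal_rpow_of_nonneg (neg_nonneg.mpr hy) hp0.le]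

end Final
/-- Contractivity of the decreasing rearrangement in `L^p`, `1 ≤ p ≤ ∞`. -/
theorem stmt_3 {d : ℕ} (Ω : Set (EuclideanSpace ℝ (Fin d)))
    (hΩo : IsOpen Ω) (hΩb : Bornology.IsBounded Ω)
    (p : ENNReal) (hp : 1 ≤ p)
    (u v : EuclideanSpace ℝ (Fin d) → ℝ) (hu : Measurable u) (hv : Measurable v)
    (hup : MemLp u p (volume.restrict Ω)) (hvp : MemLp v p (volume.restrict Ω)) :
    eLpNorm (fun s => decRearr Ω u s - decRearr Ω v s) p
        (volume.restrict (Ioo (0 : ℝ) ((volume Ω).toReal)))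
      ≤ eLpNorm (fun x => u x - v x) p (volume.restrict Ω) := by
  have hΩm : MeasurableSet Ω := hΩo.measurableSet
  have hfin : volume Ω ≠ ⊤ := hΩb.measure_lt_top.ne
  rcases eq_or_ne p ⊤ with hptop | hptop
  · subst hptop
    exact linfty_case hΩm hfin hu hv
  · have hp0 : p ≠ 0 := (zero_lt_one.trans_le hp).ne'
    have hp'1 : (1:ℝ) ≤ p.toReal := by
      rw [← ENNReal.toReal_one]
      exact ENNReal.toReal_mono hptop hp
    set ubar := (Ioo (0:ℝ) ((volume Ω).toReal)).indicator (decRearr Ω u) with hubar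
    set vbar := (Ioo (0:ℝ) ((volume Ω).toReal)).indicator (decRearr Ω v) with hvbar
    have hmU : Measurable ubar := measurable_indicator_decRearr hΩm hfin hu
    have hmV : Measurable vbar := measurable_indicator_decRearr hΩm hfin hv
    have hcongr : eLpNorm (fun s => decRearr Ω u s - decRearr Ω v s) p
        (volume.restrict (Ioo (0:ℝ) ((volume Ω).toReal)))
        = eLpNorm (fun s => ubar s - vbar s) p
            (volume.restrict (Ioo (0:ℝ) ((volume Ω).toReal))) := by
      apply eLpNorm_congr_ae
      filter_upwards [ae_restrict_mem measurableSet_Ioo] with s hs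
      rw [hubar, hvbar, indicator_of_mem hs, indicator_of_mem hs]
    rw [hcongr, eLpNorm_eq_lintegral_rpow_enorm_toReal hp0 hptop,
      eLpNorm_eq_lintegral_rpow_enorm_toReal hp0 hptop]
    refine ENNReal.rpow_le_rpow ?_ (by positivity)
    have hmes1 : Measurable (fun s => ENNReal.ofReal (max (ubar s - vbar s) 0 ^ p.toReal)) :=
      (((hmU.sub hmV).max measurable_const).pow measurable_const).ennreal_ofReal
    have hmes2 : Measurable (fun x => ENNReal.ofReal (max (u x - v x) 0 ^ p.toReal)) :=
      (((hu.sub hv).max measurable_const).pow measurable_const).ennreal_ofReal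
    calc ∫⁻ s, (‖ubar s - vbar s‖₊ : ENNReal) ^ p.toReal
          ∂(volume.restrict (Ioo (0:ℝ) ((volume Ω).toReal)))
        = ∫⁻ s, (ENNReal.ofReal (max (ubar s - vbar s) 0 ^ p.toReal)
            + ENNReal.ofReal (max (vbar s - ubar s) 0 ^ p.toReal))
            ∂(volume.restrict (Ioo (0:ℝ) ((volume Ω).toReal))) := by
          apply lintegral_congr
          intro s
          rw [← neg_sub (ubar s) (vbar s)]
          exact enorm_rpow_split hp'1 _
      _ = (∫⁻ s, ENNReal.ofReal (max (ubar s - vbar s) 0 ^ p.toReal)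
            ∂(volume.restrict (Ioo (0:ℝ) ((volume Ω).toReal))))
          + ∫⁻ s, ENNReal.ofReal (max (vbar s - ubar s) 0 ^ p.toReal)
            ∂(volume.restrict (Ioo (0:ℝ) ((volume Ω).toReal))) :=
          lintegral_add_left hmes1 _
      _ ≤ (∫⁻ x, ENNReal.ofReal (max (u x - v x) 0 ^ p.toReal) ∂(volume.restrict Ω))
          + ∫⁻ x, ENNReal.ofReal (max (v x - u x) 0 ^ p.toReal) ∂(volume.restrict Ω) :=
          add_le_add
            (main_ineq _ _ hmU hmV hu hv hp'1 (hcmp hΩm hfin hu hv))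
            (main_ineq _ _ hmV hmU hv hu hp'1 (hcmp hΩm hfin hv hu))
      _ = ∫⁻ x, (ENNReal.ofReal (max (u x - v x) 0 ^ p.toReal)
            + ENNReal.ofReal (max (v x - u x) 0 ^ p.toReal)) ∂(volume.restrict Ω) :=
          (lintegral_add_left hmes2 _).symm
      _ = ∫⁻ x, (‖u x - v x‖₊ : ENNReal) ^ p.toReal ∂(volume.restrict Ω) := by
          apply lintegral_congr
          intro x
          rw [← neg_sub (u x) (v x)]
          exact (enorm_rpow_split hp'1 _).symm
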